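/- Let D ⊂ ℂⁿ be a bounded domain. Let f_k, f : D → D be holomorphic maps whose images are relatively compact in D, and suppose f_k → f uniformly on compact subsets of D. Then the set {τ(f_k) : k ∈ ℕ} of fixed points has compact closure contained in D. -/

import Mathlib

open Metric Set Function Filter Topology

namespace RittWavreAux

variable {E : Type*} [NormedAddCommGroup E] [NormedSpace ℂ E]

/-- Cauchy/Schwarz estimate: if `f` is holomorphic on `ball x r` and its values stay
within distance `M` of `f x`, then `‖fderiv ℂ f x‖ ≤ M / r`. -/
lemma norm_fderiv_le_of_ball {f : E → E} {x : E} {r M : ℝ} (hr : 0 < r) (hM : 0 ≤ M)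
    (hf : ∀ u ∈ ball x r, DifferentiableAt ℂ f u)
    (hb : ∀ u ∈ ball x r, ‖f u - f x‖ ≤ M) :
    ‖fderiv ℂ f x‖ ≤ M / r := by
  refine ContinuousLinearMap.opNorm_le_bound _ (div_nonneg hM hr.le) fun v => ?_
  rcases eq_or_ne v 0 with rfl | hv
  · simp
  have hvn : 0 < ‖v‖ := norm_pos_iff.mpr hv
  set ρ := r / ‖v‖ with hρ
  have hρpos : 0 < ρ := div_pos hr hvn
  set g : ℂ → E := fun ζ => f (x + ζ • v) with hg
  have hmem : ∀ ζ : ℂ, ζ ∈ ball (0 : ℂ) ρ → x + ζ • v ∈ ball x r := by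
    intro ζ hζ
    rw [mem_ball_zero_iff] at hζ
    rw [mem_ball_iff_norm]
    have : ‖x + ζ • v - x‖ = ‖ζ‖ * ‖v‖ := by
      rw [add_sub_cancel_left, norm_smul]
    rw [this]
    calc ‖ζ‖ * ‖v‖ < ρ * ‖v‖ := by gcongr
      _ = r := by rw [hρ, div_mul_cancel₀ r hvn.ne']
  have hgdiff : DifferentiableOn ℂ g (ball 0 ρ) := by
    intro ζ hζ
    have h1 : DifferentiableAt ℂ f (x + ζ • v) := hf _ (hmem ζ hζ)
    have h2 : DifferentiableAt ℂ (fun ζ : ℂ => x + ζ • v) ζ :=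
      (differentiableAt_id.smul_const v).const_add x
    exact (h1.comp ζ h2).differentiableWithinAt
  have hg0 : g 0 = f x := by simp [hg]
  have hd0 : HasDerivAt g (fderiv ℂ f x v) 0 := by
    have hline : HasDerivAt (fun ζ : ℂ => x + ζ • v) v 0 := by
      simpa using ((hasDerivAt_id (0 : ℂ)).smul_const v).const_add x
    have hfd : HasFDerivAt f (fderiv ℂ f x) (x + (0 : ℂ) • v) := by
      simpa using (hf x (mem_ball_self hr)).hasFDerivAt
    exact hfd.comp_hasDerivAt 0 hline
  have key : ∀ ε : ℝ, 0 < ε → ‖fderiv ℂ f x v‖ ≤ (M + ε) / ρ := by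
    intro ε hε
    have hgmaps : MapsTo g (ball (0 : ℂ) ρ) (ball (g 0) (M + ε)) := by
      intro ζ hζ
      have hle : ‖g ζ - g 0‖ ≤ M := by
        rw [hg0]; exact hb _ (hmem ζ hζ)
      rw [mem_ball, dist_eq_norm]
      linarith
    have := Complex.norm_deriv_le_div_of_mapsTo_ball hgdiff (hgmaps.mono_right ball_subset_closedBall) hρpos
    rwa [hd0.deriv] at this
  have h2 : ‖fderiv ℂ f x v‖ ≤ M / ρ := by
    by_contra hlt
    push_neg at hlt
    set a := ‖fderiv ℂ f x v‖ with ha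
    have hd : 0 < (a - M / ρ) * ρ / 2 := by nlinarith
    have hk := key _ hd
    rw [add_div] at hk
    have hsimp : (a - M / ρ) * ρ / 2 / ρ = (a - M / ρ) / 2 := by
      rw [div_div, mul_comm (2:ℝ) ρ, ← div_div, mul_div_assoc, div_self hρpos.ne', mul_one]
    rw [hsimp] at hk
    linarith
  calc ‖fderiv ℂ f x v‖ ≤ M / ρ := h2
    _ = M / r * ‖v‖ := by rw [hρ, div_div_eq_mul_div]; ring

lemma iterate_differentiableOn {D : Set E} {f : E → E}
    (hf : DifferentiableOn ℂ f D) (hm : MapsTo f D D) :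
    ∀ m, DifferentiableOn ℂ f^[m] D := by
  intro m
  induction m with
  | zero => simpa using differentiableOn_id
  | succ m ih =>
    rw [Function.iterate_succ']
    exact hf.comp ih (hm.iterate m)

/-- If `G` is holomorphic on an open preconnected bounded `D`, maps `D` into itself, fixes
`z ∈ D`, and is a strict contraction toward `z` on a small ball around `z`, then every
orbit converges to `z`. -/
lemma basin {D : Set E} {G : E → E} {z : E} {R r0 : ℝ}
    (hDopen : IsOpen D) (hDpre : IsPreconnected D) (hDR : D ⊆ ball 0 R)
    (hG : DifferentiableOn ℂ G D) (hmaps : MapsTo G D D)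
    (hz : z ∈ D) (hGz : G z = z) (hr0 : 0 < r0) (hballD : ball z r0 ⊆ D)
    (hcontr : ∀ x ∈ ball z r0, ‖G x - z‖ ≤ 3 / 4 * ‖x - z‖)
    {y : E} (hy : y ∈ D) :
    Tendsto (fun j => G^[j] y) atTop (𝓝 z) := by
  have hR : 0 < R := lt_of_le_of_lt dist_nonneg (mem_ball.mp (hDR hz))
  have hiter_maps : ∀ j, MapsTo G^[j] D D := fun j => hmaps.iterate j
  have hiter_diff : ∀ j, DifferentiableOn ℂ G^[j] D := iterate_differentiableOn hG hmaps
  -- local convergence on the contraction ball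
  have claimA : ∀ w ∈ ball z r0, Tendsto (fun j => G^[j] w) atTop (𝓝 z) := by
    intro w hw
    have hind : ∀ j, G^[j] w ∈ ball z r0 ∧ ‖G^[j] w - z‖ ≤ (3 / 4 : ℝ) ^ j * ‖w - z‖ := by
      intro j
      induction j with
      | zero => exact ⟨hw, by simp⟩
      | succ j ih =>
        have h1 : ‖G (G^[j] w) - z‖ ≤ 3 / 4 * ‖G^[j] w - z‖ := hcontr _ ih.1
        have h2 : ‖G^[j + 1] w - z‖ ≤ (3 / 4 : ℝ) ^ (j + 1) * ‖w - z‖ := by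
          rw [Function.iterate_succ_apply']
          calc ‖G (G^[j] w) - z‖ ≤ 3 / 4 * ‖G^[j] w - z‖ := h1
            _ ≤ 3 / 4 * ((3 / 4 : ℝ) ^ j * ‖w - z‖) := by
                have := ih.2; nlinarith [norm_nonneg (G^[j] w - z)]
            _ = (3 / 4 : ℝ) ^ (j + 1) * ‖w - z‖ := by ring
        refine ⟨?_, h2⟩
        rw [mem_ball_iff_norm]
        have hwz : ‖w - z‖ < r0 := mem_ball_iff_norm.mp hw
        have hp1 : (3 / 4 : ℝ) ^ (j + 1) ≤ 1 :=
          pow_le_one₀ (by norm_num) (by norm_num)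
        nlinarith [norm_nonneg (w - z), h2]
    have hlim : Tendsto (fun j => (3 / 4 : ℝ) ^ j * ‖w - z‖) atTop (𝓝 0) := by
      have h34 : Tendsto (fun j : ℕ => (3 / 4 : ℝ) ^ j) atTop (𝓝 0) :=
        tendsto_pow_atTop_nhds_zero_of_lt_one (by norm_num) (by norm_num)
      simpa using h34.mul_const ‖w - z‖
    rw [tendsto_iff_dist_tendsto_zero]
    refine squeeze_zero (fun j => dist_nonneg) (fun j => ?_) hlim
    rw [dist_eq_norm]
    exact (hind j).2
  -- the basin of attraction
  set S : Set E := {x | x ∈ D ∧ Tendsto (fun j => G^[j] x) atTop (𝓝 z)} with hS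
  have hSopen : IsOpen S := by
    rw [isOpen_iff_forall_mem_open]
    rintro x ⟨hxD, hxT⟩
    obtain ⟨j1, hj1⟩ := (hxT.eventually (ball_mem_nhds z hr0)).exists
    refine ⟨D ∩ G^[j1] ⁻¹' ball z r0, ?_, ?_, hxD, hj1⟩
    · rintro u ⟨huD, hu⟩
      refine ⟨huD, ?_⟩
      have hshift : Tendsto (fun j => G^[j + j1] u) atTop (𝓝 z) := by
        have := claimA _ hu
        simpa [Function.iterate_add_apply] using this
      exact (tendsto_add_atTop_iff_nat j1).mp hshift
    · exact ((hiter_diff j1).continuousOn).isOpen_inter_preimage hDopen isOpen_ball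
  have hSclcl : closure S ∩ D ⊆ S := by
    rintro x ⟨hxcl, hxD⟩
    obtain ⟨ε, hε, hballε⟩ := Metric.isOpen_iff.mp hDopen x hxD
    set r := ε / 2 with hrdef
    have hrpos : 0 < r := by positivity
    have hsubD : ∀ u ∈ ball x r, ball u r ⊆ D := by
      intro u hu v hv
      apply hballε
      rw [mem_ball] at hu hv ⊢
      calc dist v x ≤ dist v u + dist u x := dist_triangle _ _ _
        _ < r + r := by linarith
        _ = ε := by rw [hrdef]; ring
    set C := 2 * R / r with hC
    have hCpos : 0 < C := by positivity
    -- uniform Lipschitz bound for all iterates on ball x r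
    have hlip : ∀ j, ∀ p ∈ ball x r, ∀ q ∈ ball x r,
        ‖G^[j] p - G^[j] q‖ ≤ C * ‖p - q‖ := by
      intro j p hp q hq
      have hdiff : ∀ u ∈ ball x r, DifferentiableAt ℂ G^[j] u := by
        intro u hu
        exact (hiter_diff j).differentiableAt
          (hDopen.mem_nhds (hsubD u hu (mem_ball_self hrpos)))
      have hbound : ∀ u ∈ ball x r, ‖fderiv ℂ G^[j] u‖ ≤ C := by
        intro u hu
        have h1 : ∀ w ∈ ball u r, DifferentiableAt ℂ G^[j] w := by
          intro w hw
          exact (hiter_diff j).differentiableAt (hDopen.mem_nhds (hsubD u hu hw))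
        have h2 : ∀ w ∈ ball u r, ‖G^[j] w - G^[j] u‖ ≤ 2 * R := by
          intro w hw
          have hwD : w ∈ D := hsubD u hu hw
          have huD : u ∈ D := hsubD u hu (mem_ball_self hrpos)
          have hw1 : ‖G^[j] w‖ < R := mem_ball_zero_iff.mp (hDR (hiter_maps j hwD))
          have hu1 : ‖G^[j] u‖ < R := mem_ball_zero_iff.mp (hDR (hiter_maps j huD))
          calc ‖G^[j] w - G^[j] u‖ ≤ ‖G^[j] w‖ + ‖G^[j] u‖ := norm_sub_le _ _
            _ ≤ 2 * R := by linarith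
        have := norm_fderiv_le_of_ball hrpos (by positivity) h1 h2
        simpa [hC] using this
      exact (convex_ball x r).norm_image_sub_le_of_norm_fderiv_le hdiff hbound hq hp
    rw [hS, mem_setOf_eq]
    refine ⟨hxD, ?_⟩
    rw [Metric.tendsto_atTop]
    intro ε' hε'
    have hη : 0 < min r (ε' / (2 * C)) := lt_min hrpos (by positivity)
    obtain ⟨p, hpS, hpd⟩ := Metric.mem_closure_iff.mp hxcl _ hη
    have hpball : p ∈ ball x r := by
      rw [mem_ball']; exact lt_of_lt_of_le hpd (min_le_left _ _)
    have hpdist : dist x p < ε' / (2 * C) := lt_of_lt_of_le hpd (min_le_right _ _)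
    obtain ⟨N, hN⟩ := Metric.tendsto_atTop.mp hpS.2 (ε' / 2) (by positivity)
    refine ⟨N, fun j hj => ?_⟩
    have h1 : ‖G^[j] x - G^[j] p‖ ≤ C * ‖x - p‖ :=
      hlip j x (mem_ball_self hrpos) p hpball
    have h2 : C * ‖x - p‖ < ε' / 2 := by
      have : ‖x - p‖ < ε' / (2 * C) := by rwa [← dist_eq_norm]
      calc C * ‖x - p‖ < C * (ε' / (2 * C)) := by gcongr
        _ = ε' / 2 := by field_simp
    calc dist (G^[j] x) z ≤ dist (G^[j] x) (G^[j] p) + dist (G^[j] p) z :=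
          dist_triangle _ _ _
      _ < ε' / 2 + ε' / 2 := by
          refine add_lt_add ?_ (hN j hj)
          rw [dist_eq_norm]; exact lt_of_le_of_lt h1 h2
      _ = ε' := by ring
  have hSne : (D ∩ S).Nonempty := by
    refine ⟨z, hz, hz, ?_⟩
    have : ∀ j, G^[j] z = z := fun j => Function.iterate_fixed hGz j
    simpa [this] using tendsto_const_nhds
  have hsub : D ⊆ S :=
    hDpre.subset_of_closure_inter_subset hSopen hSne
      (fun u hu => hSclcl ⟨hu.1, hu.2⟩)
  exact (hsub hy).2

/-- At a fixed point `z` of a holomorphic self-map `f` of a bounded open `D` with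
relatively compact image, some iterate of `f` is a strict contraction toward `z` on a
small ball around `z`. -/
lemma exists_contraction {D : Set E} {f : E → E} {z : E} {R : ℝ}
    (hDopen : IsOpen D) (hDR : D ⊆ ball 0 R)
    (hf : DifferentiableOn ℂ f D) (hmaps : MapsTo f D D)
    (hcpt : IsCompact (closure (f '' D))) (hsub : closure (f '' D) ⊆ D)
    (hz : z ∈ D) (hfz : f z = z) :
    ∃ m0, 1 ≤ m0 ∧ ∃ r0 > 0, ball z r0 ⊆ D ∧
      ∀ x ∈ ball z r0, ‖f^[m0] x - z‖ ≤ 3 / 4 * ‖x - z‖ := by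
  have hR : 0 < R := lt_of_le_of_lt dist_nonneg (mem_ball.mp (hDR hz))
  obtain ⟨δ, hδpos, hδ⟩ := hcpt.exists_thickening_subset_open hDopen hsub
  set t : ℝ := δ / (4 * R) with ht
  have htpos : 0 < t := by positivity
  set c : ℂ := ((1 + t : ℝ) : ℂ) with hc
  have hc1 : c - 1 = ((t : ℝ) : ℂ) := by rw [hc]; push_cast; ring
  have hcnorm : ‖c‖ = 1 + t := by
    rw [hc, Complex.norm_real, Real.norm_eq_abs, abs_of_pos (by linarith)]
  set fc : E → E := fun x => c • f x - (c - 1) • z with hfc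
  have hfcz : fc z = z := by
    rw [hfc]
    simp only [hfz, sub_smul, one_smul]
    abel
  have hnorm2R : ∀ u ∈ D, ∀ w ∈ D, ‖u - w‖ < 2 * R := by
    intro u hu w hw
    have h1 : ‖u‖ < R := mem_ball_zero_iff.mp (hDR hu)
    have h2 : ‖w‖ < R := mem_ball_zero_iff.mp (hDR hw)
    calc ‖u - w‖ ≤ ‖u‖ + ‖w‖ := norm_sub_le _ _
      _ < 2 * R := by linarith
  have hfcmaps : MapsTo fc D D := by
    intro x hx
    have hdiff : fc x - f x = (c - 1) • (f x - z) := by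
      rw [hfc]
      simp only [smul_sub, sub_smul, one_smul]
      abel
    have hnorm : ‖fc x - f x‖ < δ := by
      rw [hdiff, norm_smul, hc1]
      have h1 : ‖((t : ℝ) : ℂ)‖ = t := by
        rw [Complex.norm_real, Real.norm_eq_abs, abs_of_pos htpos]
      rw [h1]
      have h2 : ‖f x - z‖ < 2 * R := hnorm2R _ (hmaps hx) _ hz
      calc t * ‖f x - z‖ < t * (2 * R) := by gcongr
        _ = δ / 2 := by rw [ht]; field_simp; ring
        _ < δ := by linarith
    apply hδ
    rw [mem_thickening_iff]
    exact ⟨f x, subset_closure (mem_image_of_mem f hx), by rwa [dist_eq_norm]⟩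
  have hfcdiff : DifferentiableOn ℂ fc D := by
    rw [hfc]
    exact (hf.const_smul c).sub (differentiableOn_const _)
  have hAdiff : DifferentiableAt ℂ f z := hf.differentiableAt (hDopen.mem_nhds hz)
  set A : E →L[ℂ] E := fderiv ℂ f z with hA
  have hAfd : HasFDerivAt f A z := hAdiff.hasFDerivAt
  have hB : HasFDerivAt fc (c • A) z := by
    have h1 : HasFDerivAt (fun x => c • f x) (c • A) z := hAfd.const_smul c
    exact h1.sub_const ((c - 1) • z)
  obtain ⟨rz, hrz, hrzD⟩ := Metric.isOpen_iff.mp hDopen z hz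
  -- the key derivative bound for all iterates of the dilated map
  have hkey : ∀ m : ℕ, (1 + t) ^ m * ‖A ^ m‖ ≤ 2 * R / rz := by
    intro m
    have hBm : HasFDerivAt fc^[m] ((c • A) ^ m) z := hB.iterate hfcz m
    have hfcim : MapsTo fc^[m] D D := hfcmaps.iterate m
    have hdiff' : ∀ u ∈ ball z rz, DifferentiableAt ℂ fc^[m] u := by
      intro u hu
      exact (iterate_differentiableOn hfcdiff hfcmaps m).differentiableAt
        (hDopen.mem_nhds (hrzD hu))
    have hbnd : ∀ u ∈ ball z rz, ‖fc^[m] u - fc^[m] z‖ ≤ 2 * R := by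
      intro u hu
      have h1 : fc^[m] z = z := Function.iterate_fixed hfcz m
      rw [h1]
      exact le_of_lt (hnorm2R _ (hfcim (hrzD hu)) _ hz)
    have := norm_fderiv_le_of_ball hrz (by positivity) hdiff' hbnd
    rw [hBm.fderiv] at this
    have heq : ‖(c • A) ^ m‖ = (1 + t) ^ m * ‖A ^ m‖ := by
      rw [smul_pow]
      rw [norm_smul (c ^ m) (A ^ m), norm_pow, hcnorm]
    rw [heq] at this
    exact this
  -- choose an iterate with small derivative
  set Cq : ℝ := 2 * R / rz with hCq
  have hCqpos : 0 < Cq := by positivity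
  have htend : Tendsto (fun m : ℕ => (1 + t) ^ m) atTop atTop :=
    tendsto_pow_atTop_atTop_of_one_lt (by linarith)
  obtain ⟨m0, hm0⟩ := ((htend.eventually_gt_atTop (4 * Cq)).and
    (eventually_ge_atTop 1)).exists
  have hAm0 : ‖A ^ m0‖ ≤ 1 / 2 := by
    have h1 := hkey m0
    have h2 : (4 * Cq) < (1 + t) ^ m0 := hm0.1
    have h3 : (0 : ℝ) ≤ ‖A ^ m0‖ := norm_nonneg _
    nlinarith
  refine ⟨m0, hm0.2, ?_⟩
  set F := f^[m0] with hF
  have hFz : F z = z := Function.iterate_fixed hfz m0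
  have hFfd : HasFDerivAt F (A ^ m0) z := hAfd.iterate hfz m0
  have hlo := Asymptotics.isLittleO_iff.mp hFfd.isLittleO (by norm_num : (0 : ℝ) < 1 / 4)
  obtain ⟨r1, hr1pos, hr1⟩ := Metric.eventually_nhds_iff.mp hlo
  refine ⟨min rz r1, lt_min hrz hr1pos, ?_, ?_⟩
  · exact fun u hu => hrzD (mem_ball.mp (lt_of_lt_of_le (mem_ball.mp hu) (min_le_left _ _)))
  · intro x hx
    have hx1 : dist x z < r1 := lt_of_lt_of_le (mem_ball.mp hx) (min_le_right _ _)
    have h1 : ‖F x - F z - (A ^ m0) (x - z)‖ ≤ 1 / 4 * ‖x - z‖ := hr1 hx1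
    have h2 : ‖(A ^ m0) (x - z)‖ ≤ 1 / 2 * ‖x - z‖ := by
      calc ‖(A ^ m0) (x - z)‖ ≤ ‖A ^ m0‖ * ‖x - z‖ := (A ^ m0).le_opNorm _
        _ ≤ 1 / 2 * ‖x - z‖ := by
            have := norm_nonneg (x - z); nlinarith
    calc ‖F x - z‖ = ‖(F x - F z - (A ^ m0) (x - z)) + (A ^ m0) (x - z)‖ := by
          rw [hFz]; congr 1; abel
      _ ≤ ‖F x - F z - (A ^ m0) (x - z)‖ + ‖(A ^ m0) (x - z)‖ := norm_add_le _ _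
      _ ≤ 1 / 4 * ‖x - z‖ + 1 / 2 * ‖x - z‖ := add_le_add h1 h2
      _ = 3 / 4 * ‖x - z‖ := by ring

/-- Any fixed point of `f` lies in any closed set that absorbs all orbits of some point
of `D` from time `1` on. -/
lemma fixed_point_mem {D : Set E} {f : E → E} {z : E} {R : ℝ} {N : Set E}
    (hDopen : IsOpen D) (hDpre : IsPreconnected D) (hDR : D ⊆ ball 0 R)
    (hf : DifferentiableOn ℂ f D) (hmaps : MapsTo f D D)
    (hcpt : IsCompact (closure (f '' D))) (hsub : closure (f '' D) ⊆ D)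
    (hz : z ∈ D) (hfz : f z = z)
    (hN : IsClosed N) {y : E} (hy : y ∈ D)
    (horb : ∀ m, 1 ≤ m → f^[m] y ∈ N) : z ∈ N := by
  obtain ⟨m0, hm0, r0, hr0, hballD, hcontr⟩ :=
    exists_contraction hDopen hDR hf hmaps hcpt hsub hz hfz
  set G := f^[m0] with hG
  have hGdiff : DifferentiableOn ℂ G D := iterate_differentiableOn hf hmaps m0
  have hGmaps : MapsTo G D D := hmaps.iterate m0
  have hGz : G z = z := Function.iterate_fixed hfz m0
  have htend : Tendsto (fun j => G^[j] y) atTop (𝓝 z) :=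
    basin hDopen hDpre hDR hGdiff hGmaps hz hGz hr0 hballD hcontr hy
  refine hN.mem_of_tendsto htend ?_
  filter_upwards [eventually_ge_atTop 1] with j hj
  have : G^[j] y = f^[m0 * j] y := by rw [hG, ← Function.iterate_mul]
  rw [this]
  exact horb _ (le_trans hj (Nat.le_mul_of_pos_left j hm0))

end RittWavreAux

open Metric Set Function Filter Topology RittWavreAux

/-- If holomorphic self-maps `f_k` of a bounded domain `D ⊆ ℂⁿ` with relatively
compact images converge locally uniformly on `D` to `f` (also with relatively
compact image), then the set of their fixed points `{τ(f_k)}` is relatively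
compact in `D`. -/
theorem fixed_points_relatively_compact (n : ℕ) (D : Set (Fin n → ℂ))
    (hDopen : IsOpen D) (hDconn : IsConnected D) (hDbdd : Bornology.IsBounded D)
    (f : ℕ → (Fin n → ℂ) → (Fin n → ℂ)) (g : (Fin n → ℂ) → (Fin n → ℂ))
    (hf : ∀ k, DifferentiableOn ℂ (f k) D) (hfmaps : ∀ k, Set.MapsTo (f k) D D)
    (hfcpt : ∀ k, IsCompact (closure (f k '' D)))
    (hfsub : ∀ k, closure (f k '' D) ⊆ D)
    (hg : DifferentiableOn ℂ g D) (hgmaps : Set.MapsTo g D D)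
    (hgcpt : IsCompact (closure (g '' D))) (hgsub : closure (g '' D) ⊆ D)
    (hconv : TendstoLocallyUniformlyOn (fun k => f k) g Filter.atTop D)
    (z : ℕ → Fin n → ℂ) (hz : ∀ k, z k ∈ D) (hzfix : ∀ k, f k (z k) = z k) :
    IsCompact (closure (Set.range z)) ∧ closure (Set.range z) ⊆ D := by
  obtain ⟨R, hDR⟩ := hDbdd.subset_ball (0 : Fin n → ℂ)
  set K := closure (g '' D) with hK
  obtain ⟨δ, hδpos, hδsub⟩ := hgcpt.exists_cthickening_subset_open hDopen hgsub
  set N := cthickening (δ / 2) K with hN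
  have hNsub : N ⊆ D := by
    refine subset_trans (cthickening_mono (by linarith) K) hδsub
  have hNcpt : IsCompact N := hgcpt.cthickening
  have hNclosed : IsClosed N := isClosed_cthickening
  have hKN : K ⊆ N := self_subset_cthickening K
  -- uniform convergence on N
  have hU : TendstoUniformlyOn (fun k => f k) g atTop N :=
    (tendstoLocallyUniformlyOn_iff_tendstoUniformlyOn_of_compact hNcpt).mp (hconv.mono hNsub)
  have hev : ∀ᶠ k in atTop, ∀ x ∈ N, dist (g x) (f k x) < δ / 2 :=
    Metric.tendstoUniformlyOn_iff.mp hU (δ / 2) (by positivity)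
  obtain ⟨k0, hk0⟩ := eventually_atTop.mp hev
  -- a base point
  obtain ⟨x0, hx0⟩ := hDconn.nonempty
  set y := g x0 with hy
  have hyK : y ∈ K := subset_closure (mem_image_of_mem g hx0)
  have hyN : y ∈ N := hKN hyK
  have hyD : y ∈ D := hgsub hyK
  -- for k ≥ k0, f k maps N into N, hence the orbit of y stays in N
  have hzN : ∀ k, k0 ≤ k → z k ∈ N := by
    intro k hk
    have hmapsN : MapsTo (f k) N N := by
      intro x hxN
      have hxD : x ∈ D := hNsub hxN
      have h1 : dist (f k x) (g x) ≤ δ / 2 := by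
        rw [dist_comm]; exact le_of_lt (hk0 k hk x hxN)
      have h2 : f k x ∈ closedBall (g x) (δ / 2) := mem_closedBall.mpr h1
      exact closedBall_subset_cthickening (subset_closure (mem_image_of_mem g hxD)) (δ / 2) h2
    have horb : ∀ m, 1 ≤ m → (f k)^[m] y ∈ N := by
      intro m hm
      obtain ⟨m', rfl⟩ := Nat.exists_eq_add_of_le hm
      clear hm
      induction m' with
      | zero => simpa using hmapsN hyN
      | succ m' ih =>
        have : (f k)^[1 + (m' + 1)] y = f k ((f k)^[1 + m'] y) := by
          rw [show 1 + (m' + 1) = (1 + m') + 1 by ring, Function.iterate_succ_apply']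
        rw [this]
        exact hmapsN ih
    exact fixed_point_mem hDopen hDconn.isPreconnected hDR (hf k) (hfmaps k)
      (hfcpt k) (hfsub k) (hz k) (hzfix k) hNclosed hyD horb
  -- assemble: all fixed points lie in the compact set N ∪ (finitely many points)
  set T := N ∪ z '' {k | k < k0} with hT
  have hTcpt : IsCompact T := hNcpt.union ((Set.finite_Iio k0).image z).isCompact
  have hTclosed : IsClosed T := hTcpt.isClosed
  have hTD : T ⊆ D := by
    rintro u (hu | ⟨k, _, rfl⟩)
    · exact hNsub hu
    · exact hz k
  have hrange : Set.range z ⊆ T := by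
    rintro _ ⟨k, rfl⟩
    rcases le_or_gt k0 k with h | h
    · exact Or.inl (hzN k h)
    · exact Or.inr ⟨k, h, rfl⟩
  have hclT : closure (Set.range z) ⊆ T := closure_minimal hrange hTclosed
  exact ⟨hTcpt.of_isClosed_subset isClosed_closure hclT, subset_trans hclT hTD⟩
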